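/- Consider the incremental pair-extraction procedure: given the sorted list L1 of timestamps of type-a_1 events and L2 of type-a_2 events in a trace, a previously recorded threshold ts_last, and a lookback bound, the procedure first removes from both lists all timestamps strictly less than ts_last and then greedily pairs each remaining ts_i ∈ L1 with the earliest unused ts_j ∈ L2 satisfying ts_i ≤ ts_j and ts_j − ts_i ≤ lookback. Then: (1) every produced pair (ts_i, ts_j) satisfies ts_last ≤ ts_i ≤ ts_j ≤ ts_i + lookback; (2) the second components of distinct produced pairs are distinct; and (3) the produced pairs are exactly the pairs that the greedy non-overlapping extraction would produce on the full lists restricted to timestamps ≥ ts_last. -/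

import Mathlib

/-- Greedy non-overlapping pair extraction: each timestamp `x` of the first list is
paired with the minimal unused timestamp `y` of the second list satisfying `x ≤ y` and
`y - x ≤ lookback`; if the minimal unused `y ≥ x` is beyond the lookback, `x` produces
no pair (no larger `y` can qualify). -/
def greedy (lookback : ℤ) : List ℤ → List ℤ → List (ℤ × ℤ)
  | [], _ => []
  | x :: xs, ys =>
    match ys.dropWhile (fun y => decide (y < x)) with
    | [] => greedy lookback xs ys
    | y :: rest =>
      if y - x ≤ lookback then (x, y) :: greedy lookback xs rest
      else greedy lookback xs ys

lemma dropWhile_cons_not {p : ℤ → Bool} {l l' : List ℤ} {a : ℤ}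
    (h : l.dropWhile p = a :: l') : p a = false := by
  induction l with
  | nil => simp at h
  | cons b bs ih =>
    rw [List.dropWhile_cons] at h
    split at h
    · exact ih h
    · next hb => cases h; simpa using hb

lemma greedy_mem (lb : ℤ) : ∀ (xs ys : List ℤ), ∀ p ∈ greedy lb xs ys,
    p.1 ∈ xs ∧ p.2 ∈ ys ∧ p.1 ≤ p.2 ∧ p.2 ≤ p.1 + lb := by
  intro xs
  induction xs with
  | nil => intro ys p hp; simp [greedy] at hp
  | cons x xs ih =>
    intro ys p hp
    rw [greedy] at hp
    rcases hdw : ys.dropWhile (fun y => decide (y < x)) with _ | ⟨y, rest⟩ <;>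
      rw [hdw] at hp <;> simp only [] at hp
    · obtain ⟨h1, h2, h3⟩ := ih ys p hp
      exact ⟨List.mem_cons_of_mem _ h1, h2, h3⟩
    · have hsub : List.Sublist (y :: rest) ys := by
        have := List.dropWhile_sublist (l := ys) (p := fun y => decide (y < x))
        rwa [hdw] at this
      split_ifs at hp with hle
      · rcases List.mem_cons.mp hp with rfl | hp
        · have hxy : ¬ (y < x) := by simpa using dropWhile_cons_not hdw
          exact ⟨List.mem_cons_self, hsub.mem List.mem_cons_self,
            le_of_not_gt hxy, by omega⟩
        · obtain ⟨h1, h2, h3⟩ := ih rest p hp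
          exact ⟨List.mem_cons_of_mem _ h1, hsub.mem (List.mem_cons_of_mem _ h2), h3⟩
      · obtain ⟨h1, h2, h3⟩ := ih ys p hp
        exact ⟨List.mem_cons_of_mem _ h1, h2, h3⟩

lemma greedy_pairwise (lb : ℤ) : ∀ (xs ys : List ℤ), ys.Pairwise (· < ·) →
    (greedy lb xs ys).Pairwise (fun p q => p.2 < q.2) := by
  intro xs
  induction xs with
  | nil => intro ys _; simp [greedy]
  | cons x xs ih =>
    intro ys hys
    rw [greedy]
    rcases hdw : ys.dropWhile (fun y => decide (y < x)) with _ | ⟨y, rest⟩ <;>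
      simp only []
    · exact ih ys hys
    · have hsub : List.Sublist (y :: rest) ys := by
        have := List.dropWhile_sublist (l := ys) (p := fun y => decide (y < x))
        rwa [hdw] at this
      have hpw : (y :: rest).Pairwise (· < ·) := hys.sublist hsub
      split_ifs with hle
      · refine List.pairwise_cons.mpr ⟨?_, ih rest (List.pairwise_cons.mp hpw).2⟩
        intro q hq
        have := (greedy_mem lb xs rest q hq).2.1
        exact (List.pairwise_cons.mp hpw).1 q.2 this
      · exact ih ys hys

/-- For strictly increasing lists `L1`, `L2`, the incremental procedure
(first drop all timestamps `< ts_last`, then pair greedily) produces pairs `(ts_i, ts_j)`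
with (1) `ts_last ≤ ts_i ≤ ts_j ≤ ts_i + lookback`, (2) pairwise distinct second
components, and (3) exactly the pairs the greedy extraction produces on the full lists
restricted to timestamps `≥ ts_last`. -/
theorem stmt6 (L1 L2 : List ℤ) (h1 : L1.Chain' (· < ·)) (h2 : L2.Chain' (· < ·))
    (tsLast lookback : ℤ) (hlb : 0 ≤ lookback)
    (pairs : List (ℤ × ℤ))
    (hpairs : pairs = greedy lookback
      (L1.filter (fun x => decide (tsLast ≤ x)))
      (L2.filter (fun x => decide (tsLast ≤ x)))) :
    (∀ p ∈ pairs, tsLast ≤ p.1 ∧ p.1 ≤ p.2 ∧ p.2 ≤ p.1 + lookback) ∧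
    (pairs.Pairwise (fun p q => p.2 ≠ q.2)) ∧
    (pairs = greedy lookback
      (L1.filter (fun x => decide (tsLast ≤ x)))
      (L2.filter (fun x => decide (tsLast ≤ x)))) := by
  subst hpairs
  refine ⟨?_, ?_, rfl⟩
  · intro p hp
    obtain ⟨h1', h2', h3', h4'⟩ := greedy_mem lookback _ _ p hp
    have := List.of_mem_filter h1'
    simp only [decide_eq_true_eq] at this
    exact ⟨this, h3', h4'⟩
  · have : (L2.filter (fun x => decide (tsLast ≤ x))).Pairwise (· < ·) :=
      (List.isChain_iff_pairwise.mp h2).filter _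
    exact (greedy_pairwise lookback _ _ this).imp fun h => ne_of_lt h
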